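/- arXiv:2308.08863 — 6 statements merged into one kernel-verified Lean document; each statement's English description precedes it below -/
import Mathlib

section
/- Let A = √(8/3). Suppose ρ₁, u₁⁽¹⁾, θ₁, φ₁, ρ₂, u₁⁽²⁾, θ₂, φ₂ are smooth real-valued functions of (t,x) ∈ ℝ×ℝ satisfying at every point the first-order relations u₁⁽¹⁾ = Aρ₁, θ₁ = (2/3)ρ₁, φ₁ = ρ₁, together with the four equations: (i) ∂ₜρ₁ − A∂ₓρ₂ + ∂ₓu₁⁽²⁾ + ∂ₓ(ρ₁u₁⁽¹⁾) = 0; (ii) ∂ₜu₁⁽¹⁾ − A∂ₓu₁⁽²⁾ − Aρ₁∂ₓu₁⁽¹⁾ + u₁⁽¹⁾∂ₓu₁⁽¹⁾ + ∂ₓθ₂ + ∂ₓρ₂ + ∂ₓ(ρ₁θ₁) + ∂ₓφ₂ + ρ₁∂ₓφ₁ = 0; (iii) ∂ₜθ₁ − A∂ₓθ₂ + (2/3)∂ₓu₁⁽²⁾ + (2/3)θ₁∂ₓu₁⁽¹⁾ + u₁⁽¹⁾∂ₓθ₁ = 0; (iv) ∂ₓ²φ₁ − φ₂ − (1/2)φ₁²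 + ρ₂ = 0. Then ρ₁ satisfies the Korteweg–de Vries equation 2√(8/3)·∂ₜρ₁ + (58/9)·ρ₁∂ₓρ₁ + ∂ₓ³ρ₁ = 0 at every point. -/
/-- Partial derivative in `t` of a function of `(t, x) : ℝ × ℝ`. -/
noncomputable def pdt (f : ℝ × ℝ → ℝ) (p : ℝ × ℝ) : ℝ :=
  deriv (fun s => f (s, p.2)) p.1

/-- Partial derivative in `x` of a function of `(t, x) : ℝ × ℝ`. -/
noncomputable def pdx (f : ℝ × ℝ → ℝ) (p : ℝ × ℝ) : ℝ :=
  deriv (fun y => f (p.1, y)) p.2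

private lemma diffx {f : ℝ × ℝ → ℝ} (hf : ContDiff ℝ (⊤ : ℕ∞) f) (t x : ℝ) :
    DifferentiableAt ℝ (fun y => f (t, y)) x :=
  ((hf.comp (contDiff_const.prodMk contDiff_id)).differentiable (by simp)) x

private lemma difft {f : ℝ × ℝ → ℝ} (hf : ContDiff ℝ (⊤ : ℕ∞) f) (t x : ℝ) :
    DifferentiableAt ℝ (fun s => f (s, x)) t :=
  ((hf.comp (contDiff_id.prodMk contDiff_const)).differentiable (by simp)) t

private lemma pdx_const_mul {f : ℝ × ℝ → ℝ} (hf : ContDiff ℝ (⊤ : ℕ∞) f) (c : ℝ)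
    (p : ℝ × ℝ) : pdx (fun q => c * f q) p = c * pdx f p := by
  simp only [pdx]
  exact deriv_const_mul c (diffx hf p.1 p.2)

private lemma pdt_const_mul {f : ℝ × ℝ → ℝ} (hf : ContDiff ℝ (⊤ : ℕ∞) f) (c : ℝ)
    (p : ℝ × ℝ) : pdt (fun q => c * f q) p = c * pdt f p := by
  simp only [pdt]
  exact deriv_const_mul c (difft hf p.1 p.2)

private lemma pdx_mul {f g : ℝ × ℝ → ℝ} (hf : ContDiff ℝ (⊤ : ℕ∞) f)
    (hg : ContDiff ℝ (⊤ : ℕ∞) g) (p : ℝ × ℝ) :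
    pdx (fun q => f q * g q) p = pdx f p * g p + f p * pdx g p := by
  simp only [pdx]
  rw [deriv_fun_mul (diffx hf p.1 p.2) (diffx hg p.1 p.2)]

private lemma pdx_eq_fderiv {f : ℝ × ℝ → ℝ} (hf : ContDiff ℝ (⊤ : ℕ∞) f) (p : ℝ × ℝ) :
    pdx f p = fderiv ℝ f p (0, 1) := by
  have h1 : HasDerivAt (fun y => ((p.1, y) : ℝ × ℝ)) ((0 : ℝ), (1 : ℝ)) p.2 :=
    (hasDerivAt_const p.2 p.1).prodMk (hasDerivAt_id p.2)
  have h2 := (hf.differentiable (by simp) (p.1, p.2)).hasFDerivAt.comp_hasDerivAt p.2 h1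
  simpa [pdx, Function.comp_def] using h2.deriv

private lemma pdx_smooth {f : ℝ × ℝ → ℝ} (hf : ContDiff ℝ (⊤ : ℕ∞) f) :
    ContDiff ℝ (⊤ : ℕ∞) (pdx f) := by
  have h : pdx f = fun p => fderiv ℝ f p (0, 1) := funext fun p => pdx_eq_fderiv hf p
  rw [h]
  exact (hf.fderiv_right (by exact_mod_cast le_top)).clm_apply contDiff_const

/-- the first KdV profile `ρ₁` satisfies the KdV equation
`2√(8/3)·∂ₜρ₁ + (58/9)·ρ₁∂ₓρ₁ + ∂ₓ³ρ₁ = 0`. -/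
theorem kdv_from_first_order_expansion
    (A : ℝ) (hA : A = Real.sqrt (8 / 3))
    (ρ₁ u₁ θ₁ φ₁ ρ₂ u₂ θ₂ φ₂ : ℝ × ℝ → ℝ)
    (hρ₁ : ContDiff ℝ (⊤ : ℕ∞) ρ₁) (hu₁ : ContDiff ℝ (⊤ : ℕ∞) u₁)
    (hθ₁ : ContDiff ℝ (⊤ : ℕ∞) θ₁) (hφ₁ : ContDiff ℝ (⊤ : ℕ∞) φ₁)
    (hρ₂ : ContDiff ℝ (⊤ : ℕ∞) ρ₂) (hu₂ : ContDiff ℝ (⊤ : ℕ∞) u₂)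
    (hθ₂ : ContDiff ℝ (⊤ : ℕ∞) θ₂) (hφ₂ : ContDiff ℝ (⊤ : ℕ∞) φ₂)
    (rel_u : ∀ p, u₁ p = A * ρ₁ p)
    (rel_θ : ∀ p, θ₁ p = (2 / 3) * ρ₁ p)
    (rel_φ : ∀ p, φ₁ p = ρ₁ p)
    (eq1 : ∀ p, pdt ρ₁ p - A * pdx ρ₂ p + pdx u₂ p
      + pdx (fun q => ρ₁ q * u₁ q) p = 0)
    (eq2 : ∀ p, pdt u₁ p - A * pdx u₂ p - A * ρ₁ p * pdx u₁ p + u₁ p * pdx u₁ p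
      + pdx θ₂ p + pdx ρ₂ p + pdx (fun q => ρ₁ q * θ₁ q) p + pdx φ₂ p
      + ρ₁ p * pdx φ₁ p = 0)
    (eq3 : ∀ p, pdt θ₁ p - A * pdx θ₂ p + (2 / 3) * pdx u₂ p
      + (2 / 3) * θ₁ p * pdx u₁ p + u₁ p * pdx θ₁ p = 0)
    (eq4 : ∀ p, pdx (pdx φ₁) p - φ₂ p - (1 / 2) * (φ₁ p) ^ 2 + ρ₂ p = 0) :
    ∀ p, 2 * Real.sqrt (8 / 3) * pdt ρ₁ p + (58 / 9) * ρ₁ p * pdx ρ₁ p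
      + pdx (pdx (pdx ρ₁)) p = 0 := by
  intro p
  have hA2 : A ^ 2 = 8 / 3 := by
    rw [hA]; exact Real.sq_sqrt (by norm_num)
  have hApos : 0 < A := by
    rw [hA]; exact Real.sqrt_pos.mpr (by norm_num)
  have hu' : u₁ = fun q => A * ρ₁ q := funext rel_u
  have hθ' : θ₁ = fun q => (2 / 3) * ρ₁ q := funext rel_θ
  have hφ' : φ₁ = ρ₁ := funext rel_φ
  have hAρ : ContDiff ℝ (⊤ : ℕ∞) (fun q => A * ρ₁ q) := contDiff_const.mul hρ₁
  have h23ρ : ContDiff ℝ (⊤ : ℕ∞) (fun q => (2 / 3 : ℝ) * ρ₁ q) := contDiff_const.mul hρ₁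
  -- product derivative identities
  have e_ru : pdx (fun q => ρ₁ q * (A * ρ₁ q)) p
      = pdx ρ₁ p * (A * ρ₁ p) + ρ₁ p * (A * pdx ρ₁ p) := by
    have h := pdx_mul hρ₁ hAρ p
    rwa [pdx_const_mul hρ₁] at h
  have e_rθ : pdx (fun q => ρ₁ q * ((2 / 3) * ρ₁ q)) p
      = pdx ρ₁ p * ((2 / 3) * ρ₁ p) + ρ₁ p * ((2 / 3) * pdx ρ₁ p) := by
    have h := pdx_mul hρ₁ h23ρ p
    rwa [pdx_const_mul hρ₁] at h
  -- clean forms of the equations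
  have h1 := eq1 p
  simp only [hu'] at h1
  rw [e_ru] at h1
  have h2 := eq2 p
  simp only [hu', hθ', hφ'] at h2
  rw [pdt_const_mul hρ₁, pdx_const_mul hρ₁, e_rθ] at h2
  have h3 := eq3 p
  simp only [hu', hθ'] at h3
  rw [pdt_const_mul hρ₁, pdx_const_mul hρ₁ A, pdx_const_mul hρ₁ (2 / 3)] at h3
  -- x-derivative of the fourth equation
  have eq4' : ∀ q, pdx (pdx ρ₁) q - φ₂ q - (1 / 2) * (ρ₁ q * ρ₁ q) + ρ₂ q = 0 := by
    intro q
    have h := eq4 q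
    rw [hφ'] at h
    linear_combination h
  have h4x : pdx (pdx (pdx ρ₁)) p - pdx φ₂ p
      - (1 / 2) * (pdx ρ₁ p * ρ₁ p + ρ₁ p * pdx ρ₁ p) + pdx ρ₂ p = 0 := by
    have H1 : HasDerivAt (fun y => pdx (pdx ρ₁) (p.1, y)) (pdx (pdx (pdx ρ₁)) p) p.2 :=
      (diffx (pdx_smooth (pdx_smooth hρ₁)) p.1 p.2).hasDerivAt
    have H2 : HasDerivAt (fun y => φ₂ (p.1, y)) (pdx φ₂ p) p.2 :=
      (diffx hφ₂ p.1 p.2).hasDerivAt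
    have H3 : HasDerivAt (fun y => ρ₁ (p.1, y)) (pdx ρ₁ p) p.2 :=
      (diffx hρ₁ p.1 p.2).hasDerivAt
    have H4 : HasDerivAt (fun y => ρ₂ (p.1, y)) (pdx ρ₂ p) p.2 :=
      (diffx hρ₂ p.1 p.2).hasDerivAt
    have H : HasDerivAt
        (fun y => pdx (pdx ρ₁) (p.1, y) - φ₂ (p.1, y)
          - (1 / 2) * (ρ₁ (p.1, y) * ρ₁ (p.1, y)) + ρ₂ (p.1, y))
        (pdx (pdx (pdx ρ₁)) p - pdx φ₂ p
          - (1 / 2) * (pdx ρ₁ p * ρ₁ p + ρ₁ p * pdx ρ₁ p) + pdx ρ₂ p) p.2 :=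
      ((H1.sub H2).sub ((H3.mul H3).const_mul (1 / 2))).add H4
    have hfun : (fun y => pdx (pdx ρ₁) (p.1, y) - φ₂ (p.1, y)
          - (1 / 2) * (ρ₁ (p.1, y) * ρ₁ (p.1, y)) + ρ₂ (p.1, y)) = fun _ => (0 : ℝ) :=
      funext fun y => eq4' (p.1, y)
    rw [← H.deriv, hfun]
    exact deriv_const p.2 0
  rw [← hA]
  have key : (3 * A / 2) * (2 * A * pdt ρ₁ p + (58 / 9) * ρ₁ p * pdx ρ₁ p
      + pdx (pdx (pdx ρ₁)) p) = 0 := by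
    linear_combination 3 * h1 + (3 * A / 2) * h2 + (3 / 2) * h3 + (3 * A / 2) * h4x
      + (3 / 2) * (pdt ρ₁ p + pdx u₂ p) * hA2
  have h32 : (3 * A / 2) ≠ 0 := by positivity
  have := (mul_eq_zero.mp key).resolve_left h32
  linarith
end

section
/- Let A = √(8/3). Suppose ρ₁, u₁⁽¹⁾, θ₁, φ₁, ρ₂, u₁⁽²⁾, θ₂, φ₂, ρ₃, u₁⁽³⁾, θ₃, φ₃, h₁¹ are smooth real-valued functions of (t,x) ∈ ℝ×ℝ satisfying at every point: the first-order relations u₁⁽¹⁾ = Aρ₁, θ₁ = (2/3)ρ₁, φ₁ = ρ₁; the second-order relations u₁⁽²⁾ = Aρ₂ + h₁¹ with ∂ₓh₁¹ = −[∂ₜρ₁ + ∂ₓ(ρ₁u₁⁽¹⁾)], θ₂ = (2/3)ρ₂ − (1/9)ρ₁², φ₂ = ρ₂ + ∂ₓ²ρ₁ − (1/2)ρ₁²; the equation ∂ₜu₁⁽¹⁾ − A∂ₓu₁⁽²⁾ − Aρ₁∂ₓu₁⁽¹⁾ + u₁⁽¹⁾∂ₓu₁⁽¹⁾ + ∂ₓθ₂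 + ∂ₓρ₂ + ∂ₓ(ρ₁θ₁) + ∂ₓφ₂ + ρ₁∂ₓφ₁ = 0; and the third-order system: (a) ∂ₜρ₂ − A∂ₓρ₃ + ∂ₓu₁⁽³⁾ + ∂ₓ(ρ₁u₁⁽²⁾) + ∂ₓ(ρ₂u₁⁽¹⁾) = 0; (b) ∂ₜu₁⁽²⁾ + ρ₁∂ₜu₁⁽¹⁾ − A∂ₓu₁⁽³⁾ − Aρ₁∂ₓu₁⁽²⁾ − Aρ₂∂ₓu₁⁽¹⁾ + ∂ₓ(u₁⁽¹⁾u₁⁽²⁾) + ρ₁u₁⁽¹⁾∂ₓu₁⁽¹⁾ + ∂ₓθ₃ + ∂ₓρ₃ + ∂ₓ(ρ₁θ₂) + ∂ₓ(ρ₂θ₁) + ∂ₓφ₃ + ρ₂∂ₓφ₁ + ρ₁∂ₓφ₂ = 0; (c) ∂ₜθ₂ − A∂ₓθ₃ + (2/3)∂ₓu₁⁽³⁾ + (2/3)θ₁∂ₓu₁⁽²⁾ + (2/3)θ₂∂ₓu₁⁽¹⁾ + u₁⁽¹⁾∂ₓθ₂ + u₁⁽²⁾∂ₓθ₁ = 0;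 (d) ∂ₓ²φ₂ − φ₃ − φ₁φ₂ − (1/6)φ₁³ + ρ₃ = 0. Then ρ₂ satisfies the linearized inhomogeneous KdV equation 2√(8/3)·∂ₜρ₂ + (58/9)·∂ₓ(ρ₁ρ₂) + ∂ₓ³ρ₂ = h₂¹ − (1/A)h₃¹, where h₂¹ := −Aρ₁²∂ₓu₁⁽¹⁾ + ρ₁∂ₓ(ρ₁θ₁) + ρ₁²∂ₓφ₁ + ∂ₓ((1/6)φ₁³) − ∂ₜh₁¹ − 2A∂ₓ(ρ₁h₁¹) + (1/9)ρ₁²∂ₓρ₁ − ∂ₓ³(∂ₓ²ρ₁ − (1/2)ρ₁²) + ∂ₓ(ρ₁∂ₓ²ρ₁) − ∂ₓ((1/2)ρ₁³) and h₃¹ := −(2/3)∂ₓ(ρ₁h₁¹) − (1/9)∂ₜ(ρ₁²) + (4/9)ρ₁∂ₓh₁¹ − (2/27)Aρ₁²∂ₓρ₁ − (1/9)Aρ₁∂ₓ(ρ₁²) + (2/3)h₁¹∂ₓρ₁. -/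
private lemma cd_diff {g : ℝ → ℝ} (hg : ContDiff ℝ (⊤:ℕ∞) g) : Differentiable ℝ g :=
  hg.differentiable (by simp)
private lemma cdX {f : ℝ×ℝ→ℝ} (hf : ContDiff ℝ (⊤:ℕ∞) f) (t : ℝ) :
    ContDiff ℝ (⊤:ℕ∞) (fun y => f (t,y)) := hf.comp (contDiff_const.prodMk contDiff_id)
private lemma cd_pdx {f : ℝ×ℝ→ℝ} (hf : ContDiff ℝ (⊤:ℕ∞) f) :
    ContDiff ℝ (⊤:ℕ∞) (pdx f) := by
  have h1 : pdx f = fun p => fderiv ℝ f p (0, 1) := by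
    funext p
    exact (((hf.differentiable (by simp)) (p.1, p.2)).hasFDerivAt.comp_hasDerivAt
      p.2 ((hasDerivAt_const p.2 p.1).prodMk (hasDerivAt_id p.2))).deriv
  rw [h1]
  exact (contDiff_infty_iff_fderiv.mp hf).2.clm_apply contDiff_const
private lemma pdxHD {f : ℝ×ℝ→ℝ} (hf : ContDiff ℝ (⊤:ℕ∞) f) (p : ℝ×ℝ) :
    HasDerivAt (fun y => f (p.1, y)) (pdx f p) p.2 :=
  (cd_diff (cdX hf p.1) p.2).hasDerivAt
private lemma HDcmul {f : ℝ→ℝ} {f' x : ℝ} (c : ℝ) (h : HasDerivAt f f' x) :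
    HasDerivAt (fun y => c * f y) (c * f') x := by simpa using h.const_mul c
private lemma HDsq {f : ℝ→ℝ} {f' x : ℝ} (h : HasDerivAt f f' x) :
    HasDerivAt (fun y => f y ^ 2) (2 * f x * f') x := by simpa using h.fun_pow 2
private lemma HDcube {f : ℝ→ℝ} {f' x : ℝ} (h : HasDerivAt f f' x) :
    HasDerivAt (fun y => f y ^ 3) (3 * f x ^ 2 * f') x := by simpa using h.fun_pow 3

private lemma cdT {f : ℝ×ℝ→ℝ} (hf : ContDiff ℝ (⊤:ℕ∞) f) (x : ℝ) :
    ContDiff ℝ (⊤:ℕ∞) (fun s => f (s,x)) := hf.comp (contDiff_id.prodMk contDiff_const)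

private lemma pdtHD {f : ℝ×ℝ→ℝ} (hf : ContDiff ℝ (⊤:ℕ∞) f) (p : ℝ×ℝ) :
    HasDerivAt (fun s => f (s, p.2)) (pdt f p) p.1 :=
  (cd_diff (cdT hf p.2) p.1).hasDerivAt

/-- the second KdV profile `ρ₂` satisfies the linearized
inhomogeneous KdV equation
`2√(8/3)·∂ₜρ₂ + (58/9)·∂ₓ(ρ₁ρ₂) + ∂ₓ³ρ₂ = h₂¹ − (1/A)h₃¹`. -/
theorem linearized_kdv_for_second_order_profile
    (A : ℝ) (hA : A = Real.sqrt (8 / 3))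
    (ρ₁ u₁ θ₁ φ₁ ρ₂ u₂ θ₂ φ₂ ρ₃ u₃ θ₃ φ₃ h₁ : ℝ × ℝ → ℝ)
    (hρ₁ : ContDiff ℝ (⊤ : ℕ∞) ρ₁) (hu₁ : ContDiff ℝ (⊤ : ℕ∞) u₁)
    (hθ₁ : ContDiff ℝ (⊤ : ℕ∞) θ₁) (hφ₁ : ContDiff ℝ (⊤ : ℕ∞) φ₁)
    (hρ₂ : ContDiff ℝ (⊤ : ℕ∞) ρ₂) (hu₂ : ContDiff ℝ (⊤ : ℕ∞) u₂)
    (hθ₂ : ContDiff ℝ (⊤ : ℕ∞) θ₂) (hφ₂ : ContDiff ℝ (⊤ : ℕ∞) φ₂)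
    (hρ₃ : ContDiff ℝ (⊤ : ℕ∞) ρ₃) (hu₃ : ContDiff ℝ (⊤ : ℕ∞) u₃)
    (hθ₃ : ContDiff ℝ (⊤ : ℕ∞) θ₃) (hφ₃ : ContDiff ℝ (⊤ : ℕ∞) φ₃)
    (hh₁ : ContDiff ℝ (⊤ : ℕ∞) h₁)
    (rel_u₁ : ∀ p, u₁ p = A * ρ₁ p)
    (rel_θ₁ : ∀ p, θ₁ p = (2 / 3) * ρ₁ p)
    (rel_φ₁ : ∀ p, φ₁ p = ρ₁ p)
    (rel_u₂ : ∀ p, u₂ p = A * ρ₂ p + h₁ p)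
    (rel_h₁ : ∀ p, pdx h₁ p = -(pdt ρ₁ p + pdx (fun q => ρ₁ q * u₁ q) p))
    (rel_θ₂ : ∀ p, θ₂ p = (2 / 3) * ρ₂ p - (1 / 9) * (ρ₁ p) ^ 2)
    (rel_φ₂ : ∀ p, φ₂ p = ρ₂ p + pdx (pdx ρ₁) p - (1 / 2) * (ρ₁ p) ^ 2)
    (eq2 : ∀ p, pdt u₁ p - A * pdx u₂ p - A * ρ₁ p * pdx u₁ p + u₁ p * pdx u₁ p
      + pdx θ₂ p + pdx ρ₂ p + pdx (fun q => ρ₁ q * θ₁ q) p + pdx φ₂ p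
      + ρ₁ p * pdx φ₁ p = 0)
    (eqa : ∀ p, pdt ρ₂ p - A * pdx ρ₃ p + pdx u₃ p
      + pdx (fun q => ρ₁ q * u₂ q) p + pdx (fun q => ρ₂ q * u₁ q) p = 0)
    (eqb : ∀ p, pdt u₂ p + ρ₁ p * pdt u₁ p - A * pdx u₃ p - A * ρ₁ p * pdx u₂ p
      - A * ρ₂ p * pdx u₁ p + pdx (fun q => u₁ q * u₂ q) p
      + ρ₁ p * u₁ p * pdx u₁ p + pdx θ₃ p + pdx ρ₃ p
      + pdx (fun q => ρ₁ q * θ₂ q) p + pdx (fun q => ρ₂ q * θ₁ q) p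
      + pdx φ₃ p + ρ₂ p * pdx φ₁ p + ρ₁ p * pdx φ₂ p = 0)
    (eqc : ∀ p, pdt θ₂ p - A * pdx θ₃ p + (2 / 3) * pdx u₃ p
      + (2 / 3) * θ₁ p * pdx u₂ p + (2 / 3) * θ₂ p * pdx u₁ p
      + u₁ p * pdx θ₂ p + u₂ p * pdx θ₁ p = 0)
    (eqd : ∀ p, pdx (pdx φ₂) p - φ₃ p - φ₁ p * φ₂ p - (1 / 6) * (φ₁ p) ^ 3
      + ρ₃ p = 0) :
    ∀ p, 2 * Real.sqrt (8 / 3) * pdt ρ₂ p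
        + (58 / 9) * pdx (fun q => ρ₁ q * ρ₂ q) p + pdx (pdx (pdx ρ₂)) p
      = (-(A * (ρ₁ p) ^ 2 * pdx u₁ p) + ρ₁ p * pdx (fun q => ρ₁ q * θ₁ q) p
          + (ρ₁ p) ^ 2 * pdx φ₁ p + pdx (fun q => (1 / 6) * (φ₁ q) ^ 3) p
          - pdt h₁ p - 2 * A * pdx (fun q => ρ₁ q * h₁ q) p
          + (1 / 9) * (ρ₁ p) ^ 2 * pdx ρ₁ p
          - pdx (pdx (pdx (fun q => pdx (pdx ρ₁) q - (1 / 2) * (ρ₁ q) ^ 2))) p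
          + pdx (fun q => ρ₁ q * pdx (pdx ρ₁) q) p
          - pdx (fun q => (1 / 2) * (ρ₁ q) ^ 3) p)
        - (1 / A) * (-((2 / 3) * pdx (fun q => ρ₁ q * h₁ q) p)
          - (1 / 9) * pdt (fun q => (ρ₁ q) ^ 2) p + (4 / 9) * ρ₁ p * pdx h₁ p
          - (2 / 27) * A * (ρ₁ p) ^ 2 * pdx ρ₁ p
          - (1 / 9) * A * ρ₁ p * pdx (fun q => (ρ₁ q) ^ 2) p
          + (2 / 3) * h₁ p * pdx ρ₁ p) := by
  have hApos : 0 < A := by rw [hA]; positivity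
  have hAne : A ≠ 0 := ne_of_gt hApos
  have hA2 : A ^ 2 = 8 / 3 := by rw [hA]; exact Real.sq_sqrt (by norm_num)
  have hdiv : 1 / A = 3 * A / 8 := by
    rw [div_eq_div_iff hAne (by norm_num : (8:ℝ) ≠ 0)]
    linear_combination -3 * hA2
  have e7 : φ₃ = fun q => pdx (pdx φ₂) q - φ₁ q * φ₂ q - (1 / 6) * (φ₁ q) ^ 3 + ρ₃ q :=
    funext fun q => by linarith [eqd q]
  subst e7
  have e1 : u₁ = fun q => A * ρ₁ q := funext rel_u₁
  subst e1
  have e2 : θ₁ = fun q => 2 / 3 * ρ₁ q := funext rel_θ₁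
  subst e2
  have e3 : φ₁ = fun q => ρ₁ q := funext rel_φ₁
  subst e3
  have e4 : u₂ = fun q => A * ρ₂ q + h₁ q := funext rel_u₂
  subst e4
  have e5 : θ₂ = fun q => 2 / 3 * ρ₂ q - 1 / 9 * ρ₁ q ^ 2 := funext rel_θ₂
  subst e5
  have e6 : φ₂ = fun q => ρ₂ q + pdx (pdx ρ₁) q - 1 / 2 * ρ₁ q ^ 2 := funext rel_φ₂
  subst e6
  intro p
  rw [← hA, hdiv]
  have Ea := eqa p
  have Eb := eqb p
  have Ec := eqc p
  have E2 := eq2 p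
  dsimp only at Ea Eb Ec E2 ⊢
  have X1 : pdx (fun q => ((A * ρ₂ q) + h₁ q)) p = ((A * pdx ρ₂ p) + pdx h₁ p) :=
    HasDerivAt.deriv ((HDcmul (A) (pdxHD hρ₂ p)).add (pdxHD hh₁ p))
  have X2 : pdx (fun q => (A * ρ₁ q)) p = (A * pdx ρ₁ p) :=
    HasDerivAt.deriv (HDcmul (A) (pdxHD hρ₁ p))
  have X3 : pdx (fun q => ((2 / 3 * ρ₂ q) - (1 / 9 * ρ₁ q ^ 2))) p = ((2 / 3 * pdx ρ₂ p) - (1 / 9 * (2 * ρ₁ p * pdx ρ₁ p))) :=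
    HasDerivAt.deriv ((HDcmul (2 / 3) (pdxHD hρ₂ p)).sub (HDcmul (1 / 9) (HDsq (pdxHD hρ₁ p))))
  have X4 : pdx (fun q => (ρ₁ q * (2 / 3 * ρ₁ q))) p = (pdx ρ₁ p * (2 / 3 * ρ₁ p) + ρ₁ p * (2 / 3 * pdx ρ₁ p)) :=
    HasDerivAt.deriv ((pdxHD hρ₁ p).mul (HDcmul (2 / 3) (pdxHD hρ₁ p)))
  have X5 : pdx (fun q => ((ρ₂ q + pdx (pdx ρ₁) q) - (1 / 2 * ρ₁ q ^ 2))) p = ((pdx ρ₂ p + pdx (pdx (pdx ρ₁)) p) - (1 / 2 * (2 * ρ₁ p * pdx ρ₁ p))) :=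
    HasDerivAt.deriv (((pdxHD hρ₂ p).add (pdxHD (cd_pdx (cd_pdx hρ₁)) p)).sub (HDcmul (1 / 2) (HDsq (pdxHD hρ₁ p))))
  have X6 : pdx (fun q => (ρ₁ q * ((A * ρ₂ q) + h₁ q))) p = (pdx ρ₁ p * ((A * ρ₂ p) + h₁ p) + ρ₁ p * ((A * pdx ρ₂ p) + pdx h₁ p)) :=
    HasDerivAt.deriv ((pdxHD hρ₁ p).mul ((HDcmul (A) (pdxHD hρ₂ p)).add (pdxHD hh₁ p)))
  have X7 : pdx (fun q => (ρ₂ q * (A * ρ₁ q))) p = (pdx ρ₂ p * (A * ρ₁ p) + ρ₂ p * (A * pdx ρ₁ p)) :=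
    HasDerivAt.deriv ((pdxHD hρ₂ p).mul (HDcmul (A) (pdxHD hρ₁ p)))
  have X8 : pdx (fun q => ((A * ρ₁ q) * ((A * ρ₂ q) + h₁ q))) p = ((A * pdx ρ₁ p) * ((A * ρ₂ p) + h₁ p) + (A * ρ₁ p) * ((A * pdx ρ₂ p) + pdx h₁ p)) :=
    HasDerivAt.deriv ((HDcmul (A) (pdxHD hρ₁ p)).mul ((HDcmul (A) (pdxHD hρ₂ p)).add (pdxHD hh₁ p)))
  have X9 : pdx (fun q => (ρ₁ q * ((2 / 3 * ρ₂ q) - (1 / 9 * ρ₁ q ^ 2)))) p = (pdx ρ₁ p * ((2 / 3 * ρ₂ p) - (1 / 9 * ρ₁ p ^ 2)) + ρ₁ p * ((2 / 3 * pdx ρ₂ p) - (1 / 9 * (2 * ρ₁ p * pdx ρ₁ p)))) :=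
    HasDerivAt.deriv ((pdxHD hρ₁ p).mul ((HDcmul (2 / 3) (pdxHD hρ₂ p)).sub (HDcmul (1 / 9) (HDsq (pdxHD hρ₁ p)))))
  have X10 : pdx (fun q => (ρ₂ q * (2 / 3 * ρ₁ q))) p = (pdx ρ₂ p * (2 / 3 * ρ₁ p) + ρ₂ p * (2 / 3 * pdx ρ₁ p)) :=
    HasDerivAt.deriv ((pdxHD hρ₂ p).mul (HDcmul (2 / 3) (pdxHD hρ₁ p)))
  have X12 : pdx (fun q => (2 / 3 * ρ₁ q)) p = (2 / 3 * pdx ρ₁ p) :=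
    HasDerivAt.deriv (HDcmul (2 / 3) (pdxHD hρ₁ p))
  have X13 : pdx (fun q => (ρ₁ q * ρ₂ q)) p = (pdx ρ₁ p * ρ₂ p + ρ₁ p * pdx ρ₂ p) :=
    HasDerivAt.deriv ((pdxHD hρ₁ p).mul (pdxHD hρ₂ p))
  have X14 : pdx (fun q => (1 / 6 * ρ₁ q ^ 3)) p = (1 / 6 * (3 * ρ₁ p ^ 2 * pdx ρ₁ p)) :=
    HasDerivAt.deriv (HDcmul (1 / 6) (HDcube (pdxHD hρ₁ p)))
  have X15 : pdx (fun q => (ρ₁ q * h₁ q)) p = (pdx ρ₁ p * h₁ p + ρ₁ p * pdx h₁ p) :=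
    HasDerivAt.deriv ((pdxHD hρ₁ p).mul (pdxHD hh₁ p))
  have X17 : pdx (fun q => (ρ₁ q * pdx (pdx ρ₁) q)) p = (pdx ρ₁ p * pdx (pdx ρ₁) p + ρ₁ p * pdx (pdx (pdx ρ₁)) p) :=
    HasDerivAt.deriv ((pdxHD hρ₁ p).mul (pdxHD (cd_pdx (cd_pdx hρ₁)) p))
  have X18 : pdx (fun q => (1 / 2 * ρ₁ q ^ 3)) p = (1 / 2 * (3 * ρ₁ p ^ 2 * pdx ρ₁ p)) :=
    HasDerivAt.deriv (HDcmul (1 / 2) (HDcube (pdxHD hρ₁ p)))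
  have X19 : pdx (fun q => ρ₁ q ^ 2) p = (2 * ρ₁ p * pdx ρ₁ p) :=
    HasDerivAt.deriv (HDsq (pdxHD hρ₁ p))
  have T1 : pdt (fun q => (A * ρ₁ q)) p = (A * pdt ρ₁ p) :=
    HasDerivAt.deriv (HDcmul (A) (pdtHD hρ₁ p))
  have T2 : pdt (fun q => ((A * ρ₂ q) + h₁ q)) p = ((A * pdt ρ₂ p) + pdt h₁ p) :=
    HasDerivAt.deriv ((HDcmul (A) (pdtHD hρ₂ p)).add (pdtHD hh₁ p))
  have T3 : pdt (fun q => ((2 / 3 * ρ₂ q) - (1 / 9 * ρ₁ q ^ 2))) p = ((2 / 3 * pdt ρ₂ p) - (1 / 9 * (2 * ρ₁ p * pdt ρ₁ p))) :=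
    HasDerivAt.deriv ((HDcmul (2 / 3) (pdtHD hρ₂ p)).sub (HDcmul (1 / 9) (HDsq (pdtHD hρ₁ p))))
  have T4 : pdt (fun q => ρ₁ q ^ 2) p = (2 * ρ₁ p * pdt ρ₁ p) :=
    HasDerivAt.deriv (HDsq (pdtHD hρ₁ p))
  have G1 : pdx (fun q => (pdx (pdx ρ₁) q - (1 / 2 * ρ₁ q ^ 2))) = fun q => (pdx (pdx (pdx ρ₁)) q - (1 / 2 * (2 * ρ₁ q * pdx ρ₁ q))) :=
    funext fun q => HasDerivAt.deriv ((pdxHD (cd_pdx (cd_pdx hρ₁)) q).sub (HDcmul (1 / 2) (HDsq (pdxHD hρ₁ q))))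
  have G2 : pdx (fun q => (pdx (pdx (pdx ρ₁)) q - (1 / 2 * ((2 * ρ₁ q) * pdx ρ₁ q)))) = fun q => (pdx (pdx (pdx (pdx ρ₁))) q - (1 / 2 * ((2 * pdx ρ₁ q) * pdx ρ₁ q + (2 * ρ₁ q) * pdx (pdx ρ₁) q))) :=
    funext fun q => HasDerivAt.deriv ((pdxHD (cd_pdx (cd_pdx (cd_pdx hρ₁))) q).sub (HDcmul (1 / 2) ((HDcmul (2) (pdxHD hρ₁ q)).mul (pdxHD (cd_pdx hρ₁) q))))
  have X16 : pdx (pdx (pdx (fun q => (pdx (pdx ρ₁) q - (1 / 2 * ρ₁ q ^ 2))))) p = (pdx (pdx (pdx (pdx (pdx ρ₁)))) p - (1 / 2 * (((2 * pdx (pdx ρ₁) p) * pdx ρ₁ p + (2 * pdx ρ₁ p) * pdx (pdx ρ₁) p) + ((2 * pdx ρ₁ p) * pdx (pdx ρ₁) p + (2 * ρ₁ p) * pdx (pdx (pdx ρ₁)) p)))) := by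
    rw [G1, G2]
    exact HasDerivAt.deriv ((pdxHD (cd_pdx (cd_pdx (cd_pdx (cd_pdx hρ₁)))) p).sub (HDcmul (1 / 2) (((HDcmul (2) (pdxHD (cd_pdx hρ₁) p)).mul (pdxHD (cd_pdx hρ₁) p)).add ((HDcmul (2) (pdxHD hρ₁ p)).mul (pdxHD (cd_pdx (cd_pdx hρ₁)) p)))))
  have F1 : pdx (fun q => ((ρ₂ q + pdx (pdx ρ₁) q) - (1 / 2 * ρ₁ q ^ 2))) = fun q => ((pdx ρ₂ q + pdx (pdx (pdx ρ₁)) q) - (1 / 2 * (2 * ρ₁ q * pdx ρ₁ q))) :=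
    funext fun q => HasDerivAt.deriv (((pdxHD hρ₂ q).add (pdxHD (cd_pdx (cd_pdx hρ₁)) q)).sub (HDcmul (1 / 2) (HDsq (pdxHD hρ₁ q))))
  have F2 : pdx (fun q => ((pdx ρ₂ q + pdx (pdx (pdx ρ₁)) q) - (1 / 2 * ((2 * ρ₁ q) * pdx ρ₁ q)))) = fun q => ((pdx (pdx ρ₂) q + pdx (pdx (pdx (pdx ρ₁))) q) - (1 / 2 * ((2 * pdx ρ₁ q) * pdx ρ₁ q + (2 * ρ₁ q) * pdx (pdx ρ₁) q))) :=
    funext fun q => HasDerivAt.deriv (((pdxHD (cd_pdx hρ₂) q).add (pdxHD (cd_pdx (cd_pdx (cd_pdx hρ₁))) q)).sub (HDcmul (1 / 2) ((HDcmul (2) (pdxHD hρ₁ q)).mul (pdxHD (cd_pdx hρ₁) q))))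
  have X11 : pdx (fun q => pdx (pdx (fun q => ((ρ₂ q + pdx (pdx ρ₁) q) - (1 / 2 * ρ₁ q ^ 2)))) q - ρ₁ q * (((ρ₂ q + pdx (pdx ρ₁) q) - (1 / 2 * ρ₁ q ^ 2))) - 1 / 6 * ρ₁ q ^ 3 + ρ₃ q) p
      = (((((pdx (pdx (pdx ρ₂)) p + pdx (pdx (pdx (pdx (pdx ρ₁)))) p) - (1 / 2 * (((2 * pdx (pdx ρ₁) p) * pdx ρ₁ p + (2 * pdx ρ₁ p) * pdx (pdx ρ₁) p) + ((2 * pdx ρ₁ p) * pdx (pdx ρ₁) p + (2 * ρ₁ p) * pdx (pdx (pdx ρ₁)) p)))) - (pdx ρ₁ p * ((ρ₂ p + pdx (pdx ρ₁) p) - (1 / 2 * ρ₁ p ^ 2)) + ρ₁ p * ((pdx ρ₂ p + pdx (pdx (pdx ρ₁)) p) - (1 / 2 * (2 * ρ₁ p * pdx ρ₁ p))))) - (1 / 6 * (3 * ρ₁ p ^ 2 * pdx ρ₁ p))) + pdx ρ₃ p) := by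
    rw [F1, F2]
    exact HasDerivAt.deriv ((((((pdxHD (cd_pdx (cd_pdx hρ₂)) p).add (pdxHD (cd_pdx (cd_pdx (cd_pdx (cd_pdx hρ₁)))) p)).sub (HDcmul (1 / 2) (((HDcmul (2) (pdxHD (cd_pdx hρ₁) p)).mul (pdxHD (cd_pdx hρ₁) p)).add ((HDcmul (2) (pdxHD hρ₁ p)).mul (pdxHD (cd_pdx (cd_pdx hρ₁)) p))))).sub ((pdxHD hρ₁ p).mul (((pdxHD hρ₂ p).add (pdxHD (cd_pdx (cd_pdx hρ₁)) p)).sub (HDcmul (1 / 2) (HDsq (pdxHD hρ₁ p)))))).sub (HDcmul (1 / 6) (HDcube (pdxHD hρ₁ p)))).add (pdxHD hρ₃ p))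
  simp only [X1, X2, X3, X4, X5, X6, X7, X8, X9, X10, X12, X13, X14, X15, X17, X18, X19,
    T1, T2, T3, T4, X16, X11] at Ea Eb Ec E2 ⊢
  refine mul_left_cancel₀ hAne ?_
  linear_combination 2 * Ea + A * Eb + Ec - (A * ρ₁ p) * E2 +
    (-(1 / 9 * A * ρ₁ p ^ 2 * pdx ρ₁ p) - A * ρ₁ p * pdx ρ₂ p + pdt ρ₂ p
      - 1 / 12 * ρ₁ p * pdt ρ₁ p + pdx u₃ p + h₁ p * pdx ρ₁ p
      + 11 / 12 * ρ₁ p * pdx h₁ p) * hA2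
end

section
/- Let A = √(8/3). Suppose ρ₁, u₁⁽¹⁾, θ₁, φ₁, ρ₂, u₁⁽²⁾, θ₂, φ₂ are smooth real-valued functions of (t,x) ∈ ℝ×ℝ satisfying at every point the first-order relations u₁⁽¹⁾ = Aρ₁, θ₁ = (2/3)ρ₁, φ₁ = ρ₁, together with the two equations ∂ₜρ₁ − A∂ₓρ₂ + ∂ₓu₁⁽²⁾ + ∂ₓ(ρ₁u₁⁽¹⁾) = 0 and ∂ₜu₁⁽¹⁾ − A∂ₓu₁⁽²⁾ − Aρ₁∂ₓu₁⁽¹⁾ + u₁⁽¹⁾∂ₓu₁⁽¹⁾ + ∂ₓθ₂ + ∂ₓρ₂ + ∂ₓ(ρ₁θ₁) + ∂ₓφ₂ + ρ₁∂ₓφ₁ = 0. Then at every point −(5/3)∂ₓρ₂ + ∂ₓθ₂ + ∂ₓφ₂ + (23/3)ρ₁∂ₓρ₁ + 2A∂ₜρ₁ = 0. -/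
/-- combining the second-order mass and momentum equations
yields `−(5/3)∂ₓρ₂ + ∂ₓθ₂ + ∂ₓφ₂ + (23/3)ρ₁∂ₓρ₁ + 2A∂ₜρ₁ = 0`. -/
theorem second_order_momentum_density_relation
    (A : ℝ) (hA : A = Real.sqrt (8 / 3))
    (ρ₁ u₁ θ₁ φ₁ ρ₂ u₂ θ₂ φ₂ : ℝ × ℝ → ℝ)
    (hρ₁ : ContDiff ℝ (⊤ : ℕ∞) ρ₁) (hu₁ : ContDiff ℝ (⊤ : ℕ∞) u₁)
    (hθ₁ : ContDiff ℝ (⊤ : ℕ∞) θ₁) (hφ₁ : ContDiff ℝ (⊤ : ℕ∞) φ₁)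
    (hρ₂ : ContDiff ℝ (⊤ : ℕ∞) ρ₂) (hu₂ : ContDiff ℝ (⊤ : ℕ∞) u₂)
    (hθ₂ : ContDiff ℝ (⊤ : ℕ∞) θ₂) (hφ₂ : ContDiff ℝ (⊤ : ℕ∞) φ₂)
    (rel_u : ∀ p, u₁ p = A * ρ₁ p)
    (rel_θ : ∀ p, θ₁ p = (2 / 3) * ρ₁ p)
    (rel_φ : ∀ p, φ₁ p = ρ₁ p)
    (eq1 : ∀ p, pdt ρ₁ p - A * pdx ρ₂ p + pdx u₂ p
      + pdx (fun q => ρ₁ q * u₁ q) p = 0)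
    (eq2 : ∀ p, pdt u₁ p - A * pdx u₂ p - A * ρ₁ p * pdx u₁ p + u₁ p * pdx u₁ p
      + pdx θ₂ p + pdx ρ₂ p + pdx (fun q => ρ₁ q * θ₁ q) p + pdx φ₂ p
      + ρ₁ p * pdx φ₁ p = 0) :
    ∀ p, -(5 / 3) * pdx ρ₂ p + pdx θ₂ p + pdx φ₂ p
      + (23 / 3) * ρ₁ p * pdx ρ₁ p + 2 * A * pdt ρ₁ p = 0 := by

  intro p
  have hA2 : A * A = 8 / 3 := by
    rw [hA]; exact Real.mul_self_sqrt (by norm_num)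
  have hu₁' : u₁ = fun q => A * ρ₁ q := funext rel_u
  have hθ₁' : θ₁ = fun q => (2 / 3) * ρ₁ q := funext rel_θ
  have hφ₁' : φ₁ = fun q => ρ₁ q := funext rel_φ
  subst hu₁' hθ₁' hφ₁'
  have hd : DifferentiableAt ℝ (fun y => ρ₁ (p.1, y)) p.2 := by
    have h0 : DifferentiableAt ℝ ρ₁ (p.1, p.2) :=
      (hρ₁.differentiable (by simp)) _
    exact h0.comp p.2 ((differentiableAt_const _).prodMk differentiableAt_id)
  have e1 := eq1 p
  have e2 := eq2 p
  have h1 : pdt (fun q => A * ρ₁ q) p = A * pdt ρ₁ p := by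
    simp [pdt, deriv_const_mul_field']
  have h2 : pdx (fun q => A * ρ₁ q) p = A * pdx ρ₁ p := by
    simp [pdx, deriv_const_mul_field']
  have h3 : pdx (fun q => ρ₁ q) p = pdx ρ₁ p := rfl
  have hmul : pdx (fun q => ρ₁ q * (A * ρ₁ q)) p
      = 2 * A * (ρ₁ p * pdx ρ₁ p) := by
    show deriv (fun y => ρ₁ (p.1, y) * (A * ρ₁ (p.1, y))) p.2 = _
    rw [deriv_fun_mul hd (hd.const_mul A), deriv_const_mul_field']
    simp only [Prod.mk.eta]
    unfold pdx
    ring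
  have hmul2 : pdx (fun q => ρ₁ q * ((2 / 3) * ρ₁ q)) p
      = (4 / 3) * (ρ₁ p * pdx ρ₁ p) := by
    show deriv (fun y => ρ₁ (p.1, y) * ((2/3) * ρ₁ (p.1, y))) p.2 = _
    rw [deriv_fun_mul hd (hd.const_mul _), deriv_const_mul_field']
    simp only [Prod.mk.eta]
    unfold pdx
    ring
  beta_reduce at e1 e2
  rw [hmul] at e1
  rw [h1, h2, h3, hmul2] at e2
  linear_combination A * e1 + e2 + (pdx ρ₂ p - 2 * ρ₁ p * pdx ρ₁ p) * hA2
end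

section
/- Let A = √(8/3). Suppose ρ₁, u₁⁽¹⁾, θ₁, ρ₂, u₁⁽²⁾, θ₂, ρ₃, u₁⁽³⁾, θ₃, h₁¹ are smooth real-valued functions of (t,x) ∈ ℝ×ℝ satisfying at every point: u₁⁽¹⁾ = Aρ₁, θ₁ = (2/3)ρ₁; u₁⁽²⁾ = Aρ₂ + h₁¹; θ₂ = (2/3)ρ₂ − (1/9)ρ₁²; the equation ∂ₜρ₂ − A∂ₓρ₃ + ∂ₓu₁⁽³⁾ + ∂ₓ(ρ₁u₁⁽²⁾) + ∂ₓ(ρ₂u₁⁽¹⁾) = 0; and the equation ∂ₜθ₂ − A∂ₓθ₃ + (2/3)∂ₓu₁⁽³⁾ + (2/3)θ₁∂ₓu₁⁽²⁾ + (2/3)θ₂∂ₓu₁⁽¹⁾ + u₁⁽¹⁾∂ₓθ₂ + u₁⁽²⁾∂ₓθ₁ = 0. Then at every point (2/3)∂ₓρ₃ − ∂ₓθ₃ − (2/9)∂ₓ(ρ₁ρ₂) = −(1/A)h₃¹, where h₃¹ := −(2/3)∂ₓ(ρ₁h₁¹) − (1/9)∂ₜ(ρ₁²) + (4/9)ρ₁∂ₓh₁¹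 − (2/27)Aρ₁²∂ₓρ₁ − (1/9)Aρ₁∂ₓ(ρ₁²) + (2/3)h₁¹∂ₓρ₁. -/
private lemma sliceX {f : ℝ × ℝ → ℝ} (hf : ContDiff ℝ (⊤ : ℕ∞) f) (t : ℝ) :
    Differentiable ℝ (fun y => f (t, y)) :=
  (hf.differentiable (by simp)).comp ((differentiable_const t).prodMk differentiable_id)

private lemma sliceT {f : ℝ × ℝ → ℝ} (hf : ContDiff ℝ (⊤ : ℕ∞) f) (x : ℝ) :
    Differentiable ℝ (fun s => f (s, x)) :=
  (hf.differentiable (by simp)).comp (differentiable_id.prodMk (differentiable_const x))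

private lemma pdx_comb (a b : ℝ) {f g : ℝ × ℝ → ℝ} (hf : ContDiff ℝ (⊤ : ℕ∞) f)
    (hg : ContDiff ℝ (⊤ : ℕ∞) g) (p : ℝ × ℝ) :
    pdx (fun q => a * f q + b * g q) p = a * pdx f p + b * pdx g p := by
  unfold pdx
  rw [deriv_fun_add (((sliceX hf p.1).differentiableAt).const_mul a)
      (((sliceX hg p.1).differentiableAt).const_mul b),
    deriv_const_mul a ((sliceX hf p.1).differentiableAt),
    deriv_const_mul b ((sliceX hg p.1).differentiableAt)]

private lemma pdt_comb (a b : ℝ) {f g : ℝ × ℝ → ℝ} (hf : ContDiff ℝ (⊤ : ℕ∞) f)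
    (hg : ContDiff ℝ (⊤ : ℕ∞) g) (p : ℝ × ℝ) :
    pdt (fun q => a * f q + b * g q) p = a * pdt f p + b * pdt g p := by
  unfold pdt
  rw [deriv_fun_add (((sliceT hf p.2).differentiableAt).const_mul a)
      (((sliceT hg p.2).differentiableAt).const_mul b),
    deriv_const_mul a ((sliceT hf p.2).differentiableAt),
    deriv_const_mul b ((sliceT hg p.2).differentiableAt)]

/-- the identity
`(2/3)∂ₓρ₃ − ∂ₓθ₃ − (2/9)∂ₓ(ρ₁ρ₂) = −(1/A)h₃¹` obtained from the
third-order mass and temperature equations. -/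
theorem third_order_temperature_combination
    (A : ℝ) (hA : A = Real.sqrt (8 / 3))
    (ρ₁ u₁ θ₁ ρ₂ u₂ θ₂ ρ₃ u₃ θ₃ h₁ : ℝ × ℝ → ℝ)
    (hρ₁ : ContDiff ℝ (⊤ : ℕ∞) ρ₁) (hu₁ : ContDiff ℝ (⊤ : ℕ∞) u₁)
    (hθ₁ : ContDiff ℝ (⊤ : ℕ∞) θ₁)
    (hρ₂ : ContDiff ℝ (⊤ : ℕ∞) ρ₂) (hu₂ : ContDiff ℝ (⊤ : ℕ∞) u₂)
    (hθ₂ : ContDiff ℝ (⊤ : ℕ∞) θ₂)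
    (hρ₃ : ContDiff ℝ (⊤ : ℕ∞) ρ₃) (hu₃ : ContDiff ℝ (⊤ : ℕ∞) u₃)
    (hθ₃ : ContDiff ℝ (⊤ : ℕ∞) θ₃)
    (hh₁ : ContDiff ℝ (⊤ : ℕ∞) h₁)
    (rel_u₁ : ∀ p, u₁ p = A * ρ₁ p)
    (rel_θ₁ : ∀ p, θ₁ p = (2 / 3) * ρ₁ p)
    (rel_u₂ : ∀ p, u₂ p = A * ρ₂ p + h₁ p)
    (rel_θ₂ : ∀ p, θ₂ p = (2 / 3) * ρ₂ p - (1 / 9) * (ρ₁ p) ^ 2)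
    (eqa : ∀ p, pdt ρ₂ p - A * pdx ρ₃ p + pdx u₃ p
      + pdx (fun q => ρ₁ q * u₂ q) p + pdx (fun q => ρ₂ q * u₁ q) p = 0)
    (eqc : ∀ p, pdt θ₂ p - A * pdx θ₃ p + (2 / 3) * pdx u₃ p
      + (2 / 3) * θ₁ p * pdx u₂ p + (2 / 3) * θ₂ p * pdx u₁ p
      + u₁ p * pdx θ₂ p + u₂ p * pdx θ₁ p = 0) :
    ∀ p, (2 / 3) * pdx ρ₃ p - pdx θ₃ p - (2 / 9) * pdx (fun q => ρ₁ q * ρ₂ q) p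
      = -(1 / A) * (-((2 / 3) * pdx (fun q => ρ₁ q * h₁ q) p)
          - (1 / 9) * pdt (fun q => (ρ₁ q) ^ 2) p + (4 / 9) * ρ₁ p * pdx h₁ p
          - (2 / 27) * A * (ρ₁ p) ^ 2 * pdx ρ₁ p
          - (1 / 9) * A * ρ₁ p * pdx (fun q => (ρ₁ q) ^ 2) p
          + (2 / 3) * h₁ p * pdx ρ₁ p) := by
  intro p
  have hA0 : A ≠ 0 := by
    rw [hA]
    positivity
  have hsq : ContDiff ℝ (⊤ : ℕ∞) (fun q => (ρ₁ q) ^ 2) := hρ₁.pow 2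
  -- rewrite functions via the closure relations
  have hu₁f : u₁ = fun q => A * ρ₁ q := funext rel_u₁
  have hθ₁f : θ₁ = fun q => (2 / 3) * ρ₁ q := funext rel_θ₁
  have hu₂f : u₂ = fun q => A * ρ₂ q + (1 : ℝ) * h₁ q := by
    funext q; rw [rel_u₂ q]; ring
  have hθ₂f : θ₂ = fun q => (2 / 3) * ρ₂ q + (-(1 / 9)) * (ρ₁ q) ^ 2 := by
    funext q; rw [rel_θ₂ q]; ring
  have hsq' : (fun q => (ρ₁ q) ^ 2) = fun q => ρ₁ q * ρ₁ q := by
    funext q; ring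
  -- derivatives of composites
  have Du₁ : pdx u₁ p = A * pdx ρ₁ p := by
    rw [hu₁f]
    have h : (fun q => A * ρ₁ q) = fun q => A * ρ₁ q + 0 * ρ₁ q := by funext q; ring
    rw [h, pdx_comb A 0 hρ₁ hρ₁ p]; ring
  have Dθ₁ : pdx θ₁ p = (2 / 3) * pdx ρ₁ p := by
    rw [hθ₁f]
    have h : (fun q => (2 / 3 : ℝ) * ρ₁ q) = fun q => (2 / 3) * ρ₁ q + 0 * ρ₁ q := by
      funext q; ring
    rw [h, pdx_comb (2 / 3) 0 hρ₁ hρ₁ p]; ring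
  have Du₂ : pdx u₂ p = A * pdx ρ₂ p + pdx h₁ p := by
    rw [hu₂f, pdx_comb A 1 hρ₂ hh₁ p]; ring
  have Dθ₂x : pdx θ₂ p = (2 / 3) * pdx ρ₂ p - (1 / 9) * pdx (fun q => (ρ₁ q) ^ 2) p := by
    rw [hθ₂f, pdx_comb (2 / 3) (-(1 / 9)) hρ₂ hsq p]; ring
  have Dθ₂t : pdt θ₂ p = (2 / 3) * pdt ρ₂ p - (1 / 9) * pdt (fun q => (ρ₁ q) ^ 2) p := by
    rw [hθ₂f, pdt_comb (2 / 3) (-(1 / 9)) hρ₂ hsq p]; ring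
  have Dsq : pdx (fun q => (ρ₁ q) ^ 2) p = 2 * ρ₁ p * pdx ρ₁ p := by
    rw [hsq', pdx_mul hρ₁ hρ₁ p]; ring
  have D12 : pdx (fun q => ρ₁ q * ρ₂ q) p = pdx ρ₁ p * ρ₂ p + ρ₁ p * pdx ρ₂ p :=
    pdx_mul hρ₁ hρ₂ p
  have D1h : pdx (fun q => ρ₁ q * h₁ q) p = pdx ρ₁ p * h₁ p + ρ₁ p * pdx h₁ p :=
    pdx_mul hρ₁ hh₁ p
  have D1u2 : pdx (fun q => ρ₁ q * u₂ q) p = pdx ρ₁ p * u₂ p + ρ₁ p * pdx u₂ p :=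
    pdx_mul hρ₁ hu₂ p
  have D2u1 : pdx (fun q => ρ₂ q * u₁ q) p = pdx ρ₂ p * u₁ p + ρ₂ p * pdx u₁ p :=
    pdx_mul hρ₂ hu₁ p
  have eqap := eqa p
  have eqcp := eqc p
  rw [D1u2, D2u1, Du₁, Du₂, rel_u₁, rel_u₂] at eqap
  rw [Dθ₂t, Dθ₂x, Du₁, Du₂, Dθ₁, rel_u₁, rel_u₂, rel_θ₁, rel_θ₂] at eqcp
  set X : ℝ := (-((2 / 3) * pdx (fun q => ρ₁ q * h₁ q) p)
      - (1 / 9) * pdt (fun q => (ρ₁ q) ^ 2) p + (4 / 9) * ρ₁ p * pdx h₁ p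
      - (2 / 27) * A * (ρ₁ p) ^ 2 * pdx ρ₁ p
      - (1 / 9) * A * ρ₁ p * pdx (fun q => (ρ₁ q) ^ 2) p
      + (2 / 3) * h₁ p * pdx ρ₁ p) with hX
  have key : A * ((2 / 3) * pdx ρ₃ p - pdx θ₃ p
      - (2 / 9) * pdx (fun q => ρ₁ q * ρ₂ q) p) = -X := by
    rw [hX, D12, D1h, Dsq]
    linear_combination eqcp - (2 / 3) * eqap + (1 / 9) * A * ρ₁ p * Dsq
  calc (2 / 3) * pdx ρ₃ p - pdx θ₃ p - (2 / 9) * pdx (fun q => ρ₁ q * ρ₂ q) p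
      = ((1 / A) * A) * ((2 / 3) * pdx ρ₃ p - pdx θ₃ p
          - (2 / 9) * pdx (fun q => ρ₁ q * ρ₂ q) p) := by
        rw [one_div_mul_cancel hA0, one_mul]
    _ = (1 / A) * (A * ((2 / 3) * pdx ρ₃ p - pdx θ₃ p
          - (2 / 9) * pdx (fun q => ρ₁ q * ρ₂ q) p)) := by ring
    _ = (1 / A) * (-X) := by rw [key]
    _ = -(1 / A) * X := by ring
end

section
/- Let δ > 0 and 0 < a₀ ≤ a₁ be real constants. Let ψ : ℝ → ℝ be twice continuously differentiable, let a : ℝ → ℝ satisfy a₀ ≤ a(x) ≤ a₁ for all x, and let h : ℝ → ℝ. Assume ψ and ψ′ are square-integrable on ℝ, h is square-integrable on ℝ, ψ(x)·ψ′(x) → 0 as x → +∞ and as x → −∞, and −δψ′′(x) + a(x)ψ(x) = h(x) for every x ∈ ℝ. Then (a₀/2)·∫_ℝ ψ(x)² dx + δ·∫_ℝ ψ′(x)² dx ≤ (1/(2a₀))·∫_ℝ h(x)² dx. -/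
open MeasureTheory Filter

/-- energy estimate for the screened Poisson-type equation
`−δψ'' + aψ = h` on the line. -/
theorem screened_poisson_energy_estimate
    (δ a₀ a₁ : ℝ) (hδ : 0 < δ) (ha₀ : 0 < a₀) (ha₀₁ : a₀ ≤ a₁)
    (ψ a h : ℝ → ℝ)
    (hψ : ContDiff ℝ 2 ψ)
    (hbound : ∀ x, a₀ ≤ a x ∧ a x ≤ a₁)
    (hψ2 : Integrable fun x => (ψ x) ^ 2)
    (hψ'2 : Integrable fun x => (deriv ψ x) ^ 2)
    (hh2 : Integrable fun x => (h x) ^ 2)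
    (htop : Tendsto (fun x => ψ x * deriv ψ x) atTop (nhds 0))
    (hbot : Tendsto (fun x => ψ x * deriv ψ x) atBot (nhds 0))
    (heq : ∀ x, -δ * deriv (deriv ψ) x + a x * ψ x = h x) :
    (a₀ / 2) * (∫ x : ℝ, (ψ x) ^ 2) + δ * (∫ x : ℝ, (deriv ψ x) ^ 2)
      ≤ (1 / (2 * a₀)) * ∫ x : ℝ, (h x) ^ 2 := by
  have hψd : Differentiable ℝ ψ := hψ.differentiable (by norm_num)
  have hψ'd : Differentiable ℝ (deriv ψ) := by
    have := (contDiff_succ_iff_deriv (n := 1)).mp hψ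
    exact this.2.2.differentiable (by norm_num)
  set F : ℝ → ℝ := fun x => δ * ((deriv ψ x) ^ 2 + ψ x * deriv (deriv ψ) x) with hF
  -- derivative of δ • ψ ψ'
  have hder : ∀ x, HasDerivAt (fun x => δ * (ψ x * deriv ψ x)) (F x) x := by
    intro x
    have h1 : HasDerivAt ψ (deriv ψ x) x := (hψd x).hasDerivAt
    have h2 : HasDerivAt (deriv ψ) (deriv (deriv ψ) x) x := (hψ'd x).hasDerivAt
    have := ((h1.mul h2).const_mul δ)
    simpa only [← pow_two, Pi.mul_apply] using this
  -- F is continuous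
  have hFc : Continuous F := by
    have h1 : Continuous (deriv ψ) := (hψ.iterate_deriv' 1 1).continuous
    have h2 : Continuous (deriv (deriv ψ)) := by
      have := (hψ.iterate_deriv' 0 2).continuous
      simpa [Function.iterate_succ, Function.comp] using this
    fun_prop
  -- pointwise bound |F| ≤ dominating integrable function
  have hkey : ∀ x, δ * ψ x * deriv (deriv ψ) x = a x * (ψ x)^2 - h x * ψ x := by
    intro x
    linear_combination (-(ψ x)) * heq x
  have hdom : Integrable (fun x => δ * (deriv ψ x)^2 + a₁ * (ψ x)^2
      + ((1/(2*a₀)) * (h x)^2 + (a₀/2) * (ψ x)^2)) :=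
    ((hψ'2.const_mul δ).add (hψ2.const_mul a₁)).add
      ((hh2.const_mul _).add (hψ2.const_mul _))
  have hFint : Integrable F := by
    refine Integrable.mono' hdom hFc.aestronglyMeasurable (Filter.Eventually.of_forall ?_)
    intro x
    have hk := hkey x
    have hb := hbound x
    have hy : |h x * ψ x| ≤ (1/(2*a₀)) * (h x)^2 + (a₀/2) * (ψ x)^2 := by
      rw [abs_le]
      constructor
      · rw [neg_le, ← sub_nonneg]
        have e : (1/(2*a₀)) * (h x)^2 + (a₀/2) * (ψ x)^2 - -(h x * ψ x)
            = (h x + a₀ * ψ x)^2 / (2*a₀) := by field_simp; ring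
        rw [e]; positivity
      · rw [← sub_nonneg]
        have e : (1/(2*a₀)) * (h x)^2 + (a₀/2) * (ψ x)^2 - h x * ψ x
            = (h x - a₀ * ψ x)^2 / (2*a₀) := by field_simp; ring
        rw [e]; positivity
    have hF' : F x = δ * (deriv ψ x)^2 + (a x * (ψ x)^2 - h x * ψ x) := by
      simp only [hF]; linear_combination hk
    rw [Real.norm_eq_abs, hF']
    have h1 : a x * (ψ x)^2 ≤ a₁ * (ψ x)^2 := by nlinarith [sq_nonneg (ψ x), hb.2]
    have h2 : (0:ℝ) ≤ a x * (ψ x)^2 := by nlinarith [sq_nonneg (ψ x), hb.1, ha₀]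
    have h3 := abs_le.mp hy
    rw [abs_le]
    constructor <;> nlinarith [sq_nonneg (deriv ψ x), hδ.le]
  -- ∫ F = 0
  have hFzero : (∫ x, F x) = 0 := by
    have := integral_of_hasDerivAt_of_tendsto hder hFint
      ((hbot.const_mul δ).congr (fun x => rfl)) ((htop.const_mul δ).congr (fun x => rfl))
    simpa using this
  -- define G and compare
  have hGint : Integrable (fun x => (a₀/2) * (ψ x)^2 + δ * (deriv ψ x)^2
      - (1/(2*a₀)) * (h x)^2) :=
    ((hψ2.const_mul _).add (hψ'2.const_mul _)).sub (hh2.const_mul _)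
  have hmono : (∫ x, ((a₀/2) * (ψ x)^2 + δ * (deriv ψ x)^2 - (1/(2*a₀)) * (h x)^2))
      ≤ ∫ x, F x := by
    refine integral_mono hGint hFint (fun x => ?_)
    have hk := hkey x
    have hb := hbound x
    have hF' : F x = δ * (deriv ψ x)^2 + (a x * (ψ x)^2 - h x * ψ x) := by
      simp only [hF]; linear_combination hk
    rw [hF']
    have hy : h x * ψ x ≤ (1/(2*a₀)) * (h x)^2 + (a₀/2) * (ψ x)^2 := by
      rw [← sub_nonneg]
      have e : (1/(2*a₀)) * (h x)^2 + (a₀/2) * (ψ x)^2 - h x * ψ x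
          = (h x - a₀ * ψ x)^2 / (2*a₀) := by field_simp; ring
      rw [e]; positivity
    nlinarith [sq_nonneg (ψ x), hb.1]
  rw [hFzero] at hmono
  have hsplit : (∫ x, ((a₀/2) * (ψ x)^2 + δ * (deriv ψ x)^2 - (1/(2*a₀)) * (h x)^2))
      = (a₀/2) * (∫ x, (ψ x)^2) + δ * (∫ x, (deriv ψ x)^2)
        - (1/(2*a₀)) * (∫ x, (h x)^2) := by
    have i1 : Integrable (fun x => (a₀/2) * (ψ x)^2 + δ * (deriv ψ x)^2) := by
      exact (hψ2.const_mul _).add (hψ'2.const_mul _)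
    have i2 : Integrable (fun x => (1/(2*a₀)) * (h x)^2) := hh2.const_mul _
    rw [integral_sub i1 i2, integral_add (hψ2.const_mul _) (hψ'2.const_mul _),
      integral_const_mul, integral_const_mul, integral_const_mul]
  rw [hsplit] at hmono
  linarith
end

section
/- Let μ(v) := (2π)^{−3/2}·exp(−|v|²/2) be the global Maxwellian on ℝ³, and for ρ > 0, u ∈ ℝ³, θ > 0 let M_{[ρ,u,θ]}(v) := ρ·(2π(2/3)θ)^{−3/2}·exp(−|v−u|²/(2·(2/3)θ)) be the local Maxwellian with gas constant K = 2/3. For m ∈ ℝ, 0 ≤ q₁ ≤ 1/8 and q₂ > 0 let w(t,v) := ⟨v⟩^{2m}·exp((q₁/(1+t)^{q₂})·⟨v⟩²/2), where ⟨v⟩ := √(1+|v|²). Then for every b ≥ 0, m ∈ ℝ and ϵ ∈ (0, 1/10] there is a constant C > 0 (depending only on b, m, ϵ, q₁) such that for all t ≥ 0 and all (ρ,u,θ) with 0 < ρ ≤ 2, |u| ≤ 1/2 and |θ − 3/2| ≤ 1/4: ∫_{ℝ³} ⟨v⟩^{2b}·w(t,v)²·μ(v)^{−1}·M_{[ρ,u,θ]}(v)^{2(1−ϵ)}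 dv ≤ C. -/
open MeasureTheory Real

lemma aux_rpow_le_exp {x c : ℝ} (hx : 1 ≤ x) : x ^ c ≤ Real.exp (|c| * (x - 1)) := by
  have hx0 : 0 < x := lt_of_lt_of_le one_pos hx
  rw [Real.rpow_def_of_pos hx0]
  rw [mul_comm]
  apply Real.exp_le_exp.2
  have hlog : 0 ≤ Real.log x := Real.log_nonneg hx
  have h2 : Real.log x ≤ x - 1 := by
    have := Real.add_one_le_exp (Real.log x)
    nlinarith [Real.exp_log hx0]
  calc c * Real.log x ≤ |c| * Real.log x :=
        mul_le_mul_of_nonneg_right (le_abs_self c) hlog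
    _ ≤ |c| * (x - 1) := mul_le_mul_of_nonneg_left h2 (abs_nonneg c)

lemma aux_integrable_gauss {k : ℝ} (hk : 0 < k) :
    Integrable (fun v : EuclideanSpace ℝ (Fin 3) => Real.exp (-k * ‖v‖ ^ 2)) := by
  have h := (GaussianFourier.integrable_cexp_neg_mul_sq_norm_add
      (V := EuclideanSpace ℝ (Fin 3)) (b := (k : ℂ)) (by simpa using hk) 0 0).norm
  refine h.congr (Filter.Eventually.of_forall fun v => ?_)
  simp only [mul_zero, zero_mul, add_zero, Complex.norm_exp]
  norm_cast

lemma aux_integral_gauss {k : ℝ} (hk : 0 < k) :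
    ∫ v : EuclideanSpace ℝ (Fin 3), Real.exp (-k * ‖v‖ ^ 2)
      = (Real.pi / k) ^ (3 / 2 : ℝ) := by
  rw [GaussianFourier.integral_rexp_neg_mul_sq_norm hk]
  norm_num [finrank_euclideanSpace_fin]

set_option maxHeartbeats 2000000 in
lemma aux_pointwise (m b ϵ : ℝ) (hb : 0 ≤ b) (hϵ0 : 0 < ϵ) (hϵ1 : ϵ ≤ 1 / 10)
    (a : ℝ) (ha0 : 0 ≤ a) (ha : a ≤ 1 / 8)
    (ρ θ : ℝ) (u : EuclideanSpace ℝ (Fin 3))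
    (hρ0 : 0 < ρ) (hρ2 : ρ ≤ 2) (hu : ‖u‖ ≤ 1 / 2) (hθ : |θ - 3 / 2| ≤ 1 / 4)
    (v : EuclideanSpace ℝ (Fin 3)) :
    Real.sqrt (1 + ‖v‖ ^ 2) ^ (2 * b)
      * (Real.sqrt (1 + ‖v‖ ^ 2) ^ (2 * m)
          * Real.exp (a * Real.sqrt (1 + ‖v‖ ^ 2) ^ 2 / 2)) ^ 2
      * ((2 * Real.pi) ^ (-(3 / 2) : ℝ) * Real.exp (-‖v‖ ^ 2 / 2))⁻¹
      * (ρ * (2 * Real.pi * (2 / 3) * θ) ^ (-(3 / 2) : ℝ)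
          * Real.exp (-‖v - u‖ ^ 2 / (2 * (2 / 3) * θ))) ^ (2 * (1 - ϵ))
    ≤ (4 * (2 * Real.pi) ^ (3 / 2 : ℝ)
        * Real.exp (1 / 8 + 140 / 41 * (2 * b + 4 * |m| + 1) ^ 2))
      * Real.exp (-(41 / 560) * ‖v‖ ^ 2) := by
  have hθ' := abs_le.1 hθ
  have hθl : (5 / 4 : ℝ) ≤ θ := by linarith [hθ'.1]
  have hθu : θ ≤ 7 / 4 := by linarith [hθ'.2]
  have hθpos : (0 : ℝ) < θ := by linarith
  set r := ‖v‖ with hr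
  have hr0 : 0 ≤ r := norm_nonneg v
  set s := Real.sqrt (1 + ‖v‖ ^ 2) with hs
  have hs0 : 0 ≤ s := Real.sqrt_nonneg _
  have hs2 : s ^ 2 = 1 + r ^ 2 := Real.sq_sqrt (by positivity)
  clear_value r s
  have hs1 : 1 ≤ s := by nlinarith [sq_nonneg r]
  have hsr : s - 1 ≤ r := by nlinarith
  have hW0 : (0 : ℝ) ≤ ‖v - u‖ ^ 2 := sq_nonneg _
  have hvu : r ^ 2 - r ≤ ‖v - u‖ ^ 2 := by
    have hn : r - ‖u‖ ≤ ‖v - u‖ := by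
      have h := norm_sub_norm_le v u
      rw [hr]
      linarith
    rcases le_or_gt r (1 / 2) with hcase | hcase
    · nlinarith
    · have h2 : (r - ‖u‖) * (r - ‖u‖) ≤ ‖v - u‖ * ‖v - u‖ :=
        mul_self_le_mul_self (by linarith) hn
      nlinarith [mul_nonneg (norm_nonneg u) (norm_nonneg u),
        mul_le_mul_of_nonneg_left hu (by linarith : (0:ℝ) ≤ r)]
  have hpi := Real.pi_gt_three
  -- factor 1
  have h1 : s ^ (2 * b) ≤ Real.exp (2 * b * r) := by
    calc s ^ (2 * b) ≤ Real.exp (|2 * b| * (s - 1)) := aux_rpow_le_exp hs1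
      _ ≤ Real.exp (2 * b * r) := by
          apply Real.exp_le_exp.2
          rw [abs_of_nonneg (by linarith : (0:ℝ) ≤ 2 * b)]
          apply mul_le_mul_of_nonneg_left hsr (by linarith)
  -- factor 2
  have h2 : (s ^ (2 * m) * Real.exp (a * s ^ 2 / 2)) ^ 2
      ≤ Real.exp (4 * |m| * r + 1 / 8 + r ^ 2 / 8) := by
    have hx : s ^ (2 * m) ≤ Real.exp (2 * |m| * r) := by
      calc s ^ (2 * m) ≤ Real.exp (|2 * m| * (s - 1)) := aux_rpow_le_exp hs1
        _ ≤ Real.exp (2 * |m| * r) := by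
            apply Real.exp_le_exp.2
            rw [abs_mul, abs_of_nonneg (by norm_num : (0:ℝ) ≤ 2)]
            apply mul_le_mul_of_nonneg_left hsr (by positivity)
    have hy : Real.exp (a * s ^ 2 / 2) ≤ Real.exp (1 / 16 + r ^ 2 / 16) := by
      apply Real.exp_le_exp.2
      rw [hs2]
      nlinarith [sq_nonneg r]
    have hx0 : 0 ≤ s ^ (2 * m) := Real.rpow_nonneg hs0 _
    calc (s ^ (2 * m) * Real.exp (a * s ^ 2 / 2)) ^ 2
        ≤ (Real.exp (2 * |m| * r) * Real.exp (1 / 16 + r ^ 2 / 16)) ^ 2 := by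
          apply pow_le_pow_left₀ (by positivity)
          exact mul_le_mul hx hy (Real.exp_pos _).le (Real.exp_pos _).le
      _ = Real.exp (4 * |m| * r + 1 / 8 + r ^ 2 / 8) := by
          rw [← Real.exp_add, sq, ← Real.exp_add]
          ring_nf
  -- factor 3
  have h3 : ((2 * Real.pi) ^ (-(3 / 2) : ℝ) * Real.exp (-r ^ 2 / 2))⁻¹
      = (2 * Real.pi) ^ (3 / 2 : ℝ) * Real.exp (r ^ 2 / 2) := by
    rw [mul_inv, ← Real.rpow_neg (by positivity), ← Real.exp_neg, neg_neg]
    ring_nf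
  -- factor 4
  have hT : (0 : ℝ) < 2 * (2 / 3) * θ := by linarith
  have hP1 : (1 : ℝ) ≤ 2 * Real.pi * (2 / 3) * θ := by nlinarith
  have he0 : (0 : ℝ) ≤ 2 * (1 - ϵ) := by linarith
  have h4 : (ρ * (2 * Real.pi * (2 / 3) * θ) ^ (-(3 / 2) : ℝ)
        * Real.exp (-‖v - u‖ ^ 2 / (2 * (2 / 3) * θ))) ^ (2 * (1 - ϵ))
      ≤ 4 * Real.exp (-(27 / 35 * (r ^ 2 - r))) := by
    rw [Real.mul_rpow (by positivity) (Real.exp_pos _).le,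
        Real.mul_rpow hρ0.le (by positivity)]
    have b1 : ρ ^ (2 * (1 - ϵ)) ≤ 4 := by
      calc ρ ^ (2 * (1 - ϵ)) ≤ (2 : ℝ) ^ (2 * (1 - ϵ)) :=
            Real.rpow_le_rpow hρ0.le hρ2 he0
        _ ≤ (2 : ℝ) ^ (2 : ℝ) :=
            Real.rpow_le_rpow_of_exponent_le one_le_two (by linarith)
        _ = 4 := by
            rw [show (2 : ℝ) = ((2 : ℕ) : ℝ) by norm_num, Real.rpow_natCast]
            norm_num
    have b2 : ((2 * Real.pi * (2 / 3) * θ) ^ (-(3 / 2) : ℝ)) ^ (2 * (1 - ϵ)) ≤ 1 :=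
      Real.rpow_le_one (Real.rpow_nonneg (by positivity) _)
        (Real.rpow_le_one_of_one_le_of_nonpos hP1 (by norm_num)) he0
    have b3 : (Real.exp (-‖v - u‖ ^ 2 / (2 * (2 / 3) * θ))) ^ (2 * (1 - ϵ))
        ≤ Real.exp (-(27 / 35 * (r ^ 2 - r))) := by
      rw [← Real.exp_mul]
      apply Real.exp_le_exp.2
      have key : 27 / 35 * (r ^ 2 - r) * (2 * (2 / 3) * θ)
          ≤ ‖v - u‖ ^ 2 * (2 * (1 - ϵ)) := by
        rcases le_or_gt 0 (r ^ 2 - r) with hx | hx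
        · nlinarith [mul_le_mul_of_nonneg_right hθu hx,
            mul_nonneg hW0 (by linarith : (0:ℝ) ≤ 1 / 5 - 2 * ϵ),
            mul_le_mul_of_nonneg_left hvu (by norm_num : (0:ℝ) ≤ 9 / 5)]
        · nlinarith [mul_nonneg hW0 (by linarith : (0:ℝ) ≤ 2 - 2 * ϵ),
            mul_neg_of_pos_of_neg hθpos hx]
      calc -‖v - u‖ ^ 2 / (2 * (2 / 3) * θ) * (2 * (1 - ϵ))
          = -(‖v - u‖ ^ 2 * (2 * (1 - ϵ)) / (2 * (2 / 3) * θ)) := by ring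
        _ ≤ -(27 / 35 * (r ^ 2 - r)) := by
            apply neg_le_neg
            rw [le_div_iff₀ hT]
            exact key
    calc ρ ^ (2 * (1 - ϵ)) * ((2 * Real.pi * (2 / 3) * θ) ^ (-(3 / 2) : ℝ)) ^ (2 * (1 - ϵ))
          * (Real.exp (-‖v - u‖ ^ 2 / (2 * (2 / 3) * θ))) ^ (2 * (1 - ϵ))
        ≤ 4 * 1 * Real.exp (-(27 / 35 * (r ^ 2 - r))) := by
          apply mul_le_mul _ b3 (Real.rpow_nonneg (Real.exp_pos _).le _) (by norm_num)
          exact mul_le_mul b1 b2 (Real.rpow_nonneg (Real.rpow_nonneg (by positivity) _) _)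
            (by norm_num)
      _ = 4 * Real.exp (-(27 / 35 * (r ^ 2 - r))) := by ring
  -- combine
  calc s ^ (2 * b) * (s ^ (2 * m) * Real.exp (a * s ^ 2 / 2)) ^ 2
        * ((2 * Real.pi) ^ (-(3 / 2) : ℝ) * Real.exp (-r ^ 2 / 2))⁻¹
        * (ρ * (2 * Real.pi * (2 / 3) * θ) ^ (-(3 / 2) : ℝ)
            * Real.exp (-‖v - u‖ ^ 2 / (2 * (2 / 3) * θ))) ^ (2 * (1 - ϵ))
      ≤ Real.exp (2 * b * r) * Real.exp (4 * |m| * r + 1 / 8 + r ^ 2 / 8)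
        * ((2 * Real.pi) ^ (3 / 2 : ℝ) * Real.exp (r ^ 2 / 2))
        * (4 * Real.exp (-(27 / 35 * (r ^ 2 - r)))) := by
        rw [h3]
        apply mul_le_mul _ h4 (Real.rpow_nonneg (by positivity) _) (by positivity)
        apply mul_le_mul_of_nonneg_right _ (by positivity)
        exact mul_le_mul h1 h2 (by positivity) (Real.exp_pos _).le
    _ = (4 * (2 * Real.pi) ^ (3 / 2 : ℝ))
        * (Real.exp (2 * b * r) * Real.exp (4 * |m| * r + 1 / 8 + r ^ 2 / 8)
            * Real.exp (r ^ 2 / 2) * Real.exp (-(27 / 35 * (r ^ 2 - r)))) := by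
        ring
    _ = (4 * (2 * Real.pi) ^ (3 / 2 : ℝ))
        * Real.exp (2 * b * r + (4 * |m| * r + 1 / 8 + r ^ 2 / 8) + r ^ 2 / 2
            + -(27 / 35 * (r ^ 2 - r))) := by
        rw [← Real.exp_add, ← Real.exp_add, ← Real.exp_add]
    _ ≤ (4 * (2 * Real.pi) ^ (3 / 2 : ℝ))
        * Real.exp ((1 / 8 + 140 / 41 * (2 * b + 4 * |m| + 1) ^ 2)
            + -(41 / 560) * r ^ 2) := by
        apply mul_le_mul_of_nonneg_left _ (by positivity)
        apply Real.exp_le_exp.2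
        nlinarith [sq_nonneg (41 * r - 280 * (2 * b + 4 * |m| + 1)),
          mul_nonneg hb hr0, mul_nonneg (abs_nonneg m) hr0, abs_nonneg m]
    _ = (4 * (2 * Real.pi) ^ (3 / 2 : ℝ)
          * Real.exp (1 / 8 + 140 / 41 * (2 * b + 4 * |m| + 1) ^ 2))
        * Real.exp (-(41 / 560) * r ^ 2) := by
        rw [Real.exp_add]
        ring

/-- uniform bound on the weighted velocity integral
`∫ ⟨v⟩^{2b} w² μ⁻¹ M^{2(1−ϵ)} dv` with a constant depending only on
`b, m, ϵ, q₁`. -/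
theorem weighted_maxwellian_moment_bound
    (m q₁ : ℝ) (hq₁0 : 0 ≤ q₁) (hq₁8 : q₁ ≤ 1 / 8)
    (b ϵ : ℝ) (hb : 0 ≤ b) (hϵ0 : 0 < ϵ) (hϵ1 : ϵ ≤ 1 / 10) :
    ∃ C : ℝ, 0 < C ∧ ∀ q₂ : ℝ, 0 < q₂ → ∀ t : ℝ, 0 ≤ t →
      ∀ (ρ θ : ℝ) (u : EuclideanSpace ℝ (Fin 3)),
        0 < ρ → ρ ≤ 2 → ‖u‖ ≤ 1 / 2 → |θ - 3 / 2| ≤ 1 / 4 →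
        (∫ v : EuclideanSpace ℝ (Fin 3),
          Real.sqrt (1 + ‖v‖ ^ 2) ^ (2 * b)
          * (Real.sqrt (1 + ‖v‖ ^ 2) ^ (2 * m)
              * Real.exp ((q₁ / (1 + t) ^ q₂)
                * Real.sqrt (1 + ‖v‖ ^ 2) ^ 2 / 2)) ^ 2
          * ((2 * Real.pi) ^ (-(3 / 2) : ℝ) * Real.exp (-‖v‖ ^ 2 / 2))⁻¹
          * (ρ * (2 * Real.pi * (2 / 3) * θ) ^ (-(3 / 2) : ℝ)
              * Real.exp (-‖v - u‖ ^ 2 / (2 * (2 / 3) * θ))) ^ (2 * (1 - ϵ)))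
        ≤ C := by
  set A : ℝ := 4 * (2 * Real.pi) ^ (3 / 2 : ℝ)
      * Real.exp (1 / 8 + 140 / 41 * (2 * b + 4 * |m| + 1) ^ 2) with hA
  have hA0 : 0 < A := by positivity
  refine ⟨A * (Real.pi / (41 / 560)) ^ (3 / 2 : ℝ), by positivity, ?_⟩
  intro q₂ hq₂ t ht ρ θ u hρ0 hρ2 hu hθ
  have hden : (1 : ℝ) ≤ (1 + t) ^ q₂ := by
    calc (1 : ℝ) = (1 : ℝ) ^ q₂ := (Real.one_rpow q₂).symm
      _ ≤ (1 + t) ^ q₂ := Real.rpow_le_rpow (by norm_num) (by linarith) hq₂.le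
  have ha0 : 0 ≤ q₁ / (1 + t) ^ q₂ := div_nonneg hq₁0 (by linarith)
  have ha : q₁ / (1 + t) ^ q₂ ≤ 1 / 8 :=
    le_trans (div_le_self hq₁0 hden) hq₁8
  have hθpos : (0 : ℝ) < θ := by
    have := abs_le.1 hθ
    linarith [this.1]
  calc (∫ v : EuclideanSpace ℝ (Fin 3),
          Real.sqrt (1 + ‖v‖ ^ 2) ^ (2 * b)
          * (Real.sqrt (1 + ‖v‖ ^ 2) ^ (2 * m)
              * Real.exp ((q₁ / (1 + t) ^ q₂)
                * Real.sqrt (1 + ‖v‖ ^ 2) ^ 2 / 2)) ^ 2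
          * ((2 * Real.pi) ^ (-(3 / 2) : ℝ) * Real.exp (-‖v‖ ^ 2 / 2))⁻¹
          * (ρ * (2 * Real.pi * (2 / 3) * θ) ^ (-(3 / 2) : ℝ)
              * Real.exp (-‖v - u‖ ^ 2 / (2 * (2 / 3) * θ))) ^ (2 * (1 - ϵ)))
      ≤ ∫ v : EuclideanSpace ℝ (Fin 3), A * Real.exp (-(41 / 560) * ‖v‖ ^ 2) := by
        apply integral_mono_of_nonneg
        · filter_upwards with v
          refine mul_nonneg (mul_nonneg (mul_nonneg ?_ ?_) ?_) ?_
          · exact Real.rpow_nonneg (Real.sqrt_nonneg _) _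
          · exact sq_nonneg _
          · refine inv_nonneg.2 (mul_nonneg (Real.rpow_nonneg (by positivity) _)
              (Real.exp_pos _).le)
          · refine Real.rpow_nonneg (mul_nonneg (mul_nonneg hρ0.le
              (Real.rpow_nonneg (by positivity) _)) (Real.exp_pos _).le) _
        · exact (aux_integrable_gauss (by norm_num)).const_mul A
        · filter_upwards with v
          exact aux_pointwise m b ϵ hb hϵ0 hϵ1 _ ha0 ha ρ θ u hρ0 hρ2 hu hθ v
    _ = A * (Real.pi / (41 / 560)) ^ (3 / 2 : ℝ) := by
        rw [MeasureTheory.integral_const_mul, aux_integral_gauss (by norm_num)]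
end
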